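/- Let 1 ≤ a ≤ n, u_1,...,u_n variables, Q(z) = ∏_{|I|=a} (1 - z u_I), and P(z) = Q(z) ∑_{k≥0} s_{k^a} z^k. Then the leading coefficient of P, i.e. the coefficient of z^{(n choose a) - n}, equals (-1)^{(n choose a) + a(n-a) - 1} (u_1 ⋯ u_n)^{(n-1 choose a-1) - a}. -/

import Mathlib

/-- The alternant `a_μ = det(u_i^{μ_j})` in `n` variables. -/
noncomputable def alternant (n : ℕ) (μ : Fin n → ℕ) : MvPolynomial (Fin n) ℚ :=
  Matrix.det (Matrix.of fun i j => MvPolynomial.X i ^ μ j)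

noncomputable section RectAux

/-- The fraction field of the polynomial ring. -/
abbrev KK (n : ℕ) : Type := FractionRing (MvPolynomial (Fin n) ℚ)

def ff (n : ℕ) : MvPolynomial (Fin n) ℚ →+* KK n := algebraMap _ _

def vv (n : ℕ) (i : Fin n) : KK n := ff n (MvPolynomial.X i)

lemma ff_inj (n : ℕ) : Function.Injective (ff n) := IsFractionRing.injective _ _

lemma vv_ne_zero (n : ℕ) (i : Fin n) : vv n i ≠ 0 := by
  intro h
  exact MvPolynomial.X_ne_zero i (ff_inj n (h.trans (map_zero (ff n)).symm))

def rr (n : ℕ) (I : Finset (Fin n)) : KK n := ∏ i ∈ I, vv n i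

lemma rr_ne_zero (n : ℕ) (I : Finset (Fin n)) : rr n I ≠ 0 :=
  Finset.prod_ne_zero_iff.2 fun i _ => vv_ne_zero n i

lemma rr_eq (n : ℕ) (I : Finset (Fin n)) : rr n I = ff n (∏ i ∈ I, MvPolynomial.X i) := by
  rw [rr, map_prod]; rfl

def EE (n a : ℕ) (k : ℤ) (j : Fin n) : ℤ :=
  (if (j : ℕ) < a then k else 0) + ((n - 1 - (j : ℕ) : ℕ) : ℤ)

def ahat (n a : ℕ) (k : ℤ) : KK n :=
  Matrix.det (Matrix.of fun i j => vv n i ^ EE n a k j)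

def qP (n a : ℕ) : Polynomial (KK n) :=
  ∏ I ∈ (Finset.univ : Finset (Fin n)).powersetCard a,
    (1 - Polynomial.C (rr n I) * Polynomial.X)

lemma card_filter_lt (n a : ℕ) (han : a ≤ n) :
    ((Finset.univ : Finset (Fin n)).filter (fun j : Fin n => (j : ℕ) < a)).card = a := by
  have h : ((Finset.univ : Finset (Fin n)).filter (fun j : Fin n => (j : ℕ) < a))
      = Finset.image (Fin.castLE han) Finset.univ := by
    ext j
    simp only [Finset.mem_filter, Finset.mem_image, Finset.mem_univ, true_and]
    constructor
    · intro hj; exact ⟨⟨(j : ℕ), hj⟩, rfl⟩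
    · rintro ⟨x, rfl⟩; exact x.isLt
  rw [h, Finset.card_image_of_injective _ (Fin.castLE_injective han)]
  simp

lemma qP_natDegree_le (n a : ℕ) : (qP n a).natDegree ≤ n.choose a := by
  refine le_trans (Polynomial.natDegree_prod_le _ _) ?_
  have h : ∀ I ∈ (Finset.univ : Finset (Fin n)).powersetCard a,
      (1 - Polynomial.C (rr n I) * Polynomial.X).natDegree ≤ 1 := by
    intro I _
    have h2 : (1 - Polynomial.C (rr n I) * Polynomial.X : Polynomial (KK n))
        = Polynomial.C (-(rr n I)) * Polynomial.X + Polynomial.C 1 := by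
      rw [Polynomial.C_neg, Polynomial.C_1]; ring
    rw [h2]
    exact Polynomial.natDegree_linear_le
  refine le_trans (Finset.sum_le_sum h) ?_
  simp [Finset.card_powersetCard]

lemma qP_eval_inv (n a : ℕ) {I : Finset (Fin n)}
    (hI : I ∈ (Finset.univ : Finset (Fin n)).powersetCard a) :
    (qP n a).eval (rr n I)⁻¹ = 0 := by
  rw [qP, Polynomial.eval_prod]
  refine Finset.prod_eq_zero hI ?_
  simp [mul_inv_cancel₀ (rr_ne_zero n I)]

lemma rect_inner_sum (n a : ℕ) {I : Finset (Fin n)}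
    (hI : I ∈ (Finset.univ : Finset (Fin n)).powersetCard a) (k : ℤ) :
    ∑ m ∈ Finset.range (n.choose a + 1), (qP n a).coeff m * rr n I ^ (k - m) = 0 := by
  have hρ := rr_ne_zero n I
  have h1 : ∀ m ∈ Finset.range (n.choose a + 1),
      (qP n a).coeff m * rr n I ^ (k - m)
        = rr n I ^ (k - n.choose a) * rr n I ^ (n.choose a : ℕ)
            * ((qP n a).coeff m * ((rr n I)⁻¹) ^ m) := by
    intro m hm
    have h2 : rr n I ^ (k - (m : ℤ)) = rr n I ^ (k - n.choose a)
        * rr n I ^ (n.choose a : ℕ) * ((rr n I)⁻¹) ^ m := by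
      rw [inv_pow, ← zpow_natCast (rr n I) (n.choose a), ← zpow_natCast (rr n I) m,
        ← zpow_neg, ← zpow_add₀ hρ, ← zpow_add₀ hρ]
      congr 1; ring
    rw [h2]; ring
  rw [Finset.sum_congr rfl h1, ← Finset.mul_sum]
  have h3 : ∑ m ∈ Finset.range (n.choose a + 1), (qP n a).coeff m * ((rr n I)⁻¹) ^ m
      = (qP n a).eval (rr n I)⁻¹ :=
    (Polynomial.eval_eq_sum_range'
      (lt_of_le_of_lt (qP_natDegree_le n a) (Nat.lt_succ_self _)) _).symm
  rw [h3, qP_eval_inv n a hI, mul_zero]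

lemma ahat_expand (n a : ℕ) (k : ℤ) : ahat n a k
    = ∑ σ : Equiv.Perm (Fin n), ((Equiv.Perm.sign σ : ℤ) : KK n)
        * (rr n (Finset.image σ ((Finset.univ : Finset (Fin n)).filter
            (fun j : Fin n => (j : ℕ) < a))) ^ k
          * ∏ j, vv n (σ j) ^ ((n - 1 - (j : ℕ) : ℕ) : ℤ)) := by
  rw [ahat, Matrix.det_apply']
  refine Finset.sum_congr rfl fun σ _ => ?_
  congr 1
  rw [rr, Finset.prod_image (fun x _ y _ h => σ.injective h), ← Finset.prod_zpow]
  have h : ∀ j : Fin n, (Matrix.of fun i j => vv n i ^ EE n a k j) (σ j) j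
      = (if (j : ℕ) < a then vv n (σ j) ^ k else 1)
          * vv n (σ j) ^ ((n - 1 - (j : ℕ) : ℕ) : ℤ) := by
    intro j
    simp only [Matrix.of_apply, EE]
    rw [zpow_add₀ (vv_ne_zero n (σ j))]
    congr 1
    split <;> simp
  rw [Finset.prod_congr rfl (fun j _ => h j), Finset.prod_mul_distrib, ← Finset.prod_filter]

lemma rect_master (n a : ℕ) (han : a ≤ n) (k : ℤ) :
    ∑ m ∈ Finset.range (n.choose a + 1), (qP n a).coeff m * ahat n a (k - m) = 0 := by
  simp_rw [ahat_expand n a, Finset.mul_sum]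
  rw [Finset.sum_comm]
  refine Finset.sum_eq_zero fun σ _ => ?_
  have hIσ : Finset.image σ ((Finset.univ : Finset (Fin n)).filter
      (fun j : Fin n => (j : ℕ) < a)) ∈ (Finset.univ : Finset (Fin n)).powersetCard a := by
    rw [Finset.mem_powersetCard]
    exact ⟨Finset.subset_univ _,
      by rw [Finset.card_image_of_injective _ σ.injective, card_filter_lt n a han]⟩
  have h : ∀ m ∈ Finset.range (n.choose a + 1),
      (qP n a).coeff m * (((Equiv.Perm.sign σ : ℤ) : KK n)
        * (rr n (Finset.image σ ((Finset.univ : Finset (Fin n)).filter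
            (fun j : Fin n => (j : ℕ) < a))) ^ (k - m)
          * ∏ j, vv n (σ j) ^ ((n - 1 - (j : ℕ) : ℕ) : ℤ)))
      = (((Equiv.Perm.sign σ : ℤ) : KK n) * ∏ j, vv n (σ j) ^ ((n - 1 - (j : ℕ) : ℕ) : ℤ))
          * ((qP n a).coeff m
            * rr n (Finset.image σ ((Finset.univ : Finset (Fin n)).filter
                (fun j : Fin n => (j : ℕ) < a))) ^ (k - m)) := fun m _ => by ring
  rw [Finset.sum_congr rfl h, ← Finset.mul_sum, rect_inner_sum n a hIσ k, mul_zero]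

lemma ahat_vanish (n a : ℕ) (ha : 1 ≤ a) (hlt : a < n) (k : ℤ)
    (h1 : -(n : ℤ) < k) (h2 : k < 0) : ahat n a k = 0 := by
  obtain ⟨t, ht⟩ : ∃ t : ℕ, k = -(t : ℤ) := ⟨(-k).toNat, by omega⟩
  subst ht
  have ht1 : 1 ≤ t := by omega
  have ht2 : t ≤ n - 1 := by omega
  by_cases hta : t < a
  · refine Matrix.det_zero_of_column_eq
      (i := (⟨a - t, by omega⟩ : Fin n)) (j := ⟨a, hlt⟩)
      (Fin.ne_of_val_ne (show a - t ≠ a by omega)) ?_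
    intro i
    simp only [Matrix.of_apply]
    congr 1
    simp only [EE, Fin.val_mk]
    rw [if_pos (show a - t < a by omega), if_neg (show ¬ (a < a) by omega)]
    omega
  · refine Matrix.det_zero_of_column_eq
      (i := (⟨0, by omega⟩ : Fin n)) (j := ⟨t, by omega⟩)
      (Fin.ne_of_val_ne (show 0 ≠ t by omega)) ?_
    intro i
    simp only [Matrix.of_apply]
    congr 1
    simp only [EE, Fin.val_mk]
    rw [if_pos (show 0 < a by omega), if_neg (show ¬ (t < a) by omega)]
    omega

lemma ahat_ofNat (n a : ℕ) (k : ℕ) :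
    ahat n a (k : ℤ) =
      ff n (alternant n (fun j => (if (j : ℕ) < a then k else 0) + (n - 1 - (j : ℕ)))) := by
  rw [alternant, RingHom.map_det, ahat]
  congr 1
  ext i j
  simp only [RingHom.mapMatrix_apply, Matrix.map_apply, Matrix.of_apply, map_pow]
  rw [← zpow_natCast]
  congr 1
  simp only [EE]
  push_cast
  split <;> simp

open Fin.NatCast Fin.CommRing in
lemma ahat_neg_n (n a : ℕ) (ha : 1 ≤ a) (hlt : a < n) :
    (∏ i, vv n i) ^ a * ahat n a (-(n : ℤ))
      = (-1) ^ ((n - 1) * (n - a)) * ff n (alternant n (fun j => n - 1 - (j : ℕ))) := by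
  obtain ⟨n', rfl⟩ : ∃ n', n = n' + 1 := ⟨n - 1, by omega⟩
  set π : Equiv.Perm (Fin (n' + 1)) := (finRotate (n' + 1)) ^ (n' + 1 - a) with hπdef
  have hrot : ∀ (m : ℕ) (j : Fin (n' + 1)),
      ((finRotate (n' + 1)) ^ m) j = j + (m : Fin (n' + 1)) := by
    intro m
    induction m with
    | zero => intro j; simp
    | succ p ih =>
      intro j
      rw [pow_succ', Equiv.Perm.mul_apply, finRotate_succ_apply, ih j]
      push_cast
      ring
  have hπval : ∀ j : Fin (n' + 1),
      ((π j : ℕ)) = if (j : ℕ) < a then (j : ℕ) + (n' + 1 - a) else (j : ℕ) - a := by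
    intro j
    rw [hπdef, hrot]
    rw [Fin.val_add, Fin.val_natCast]
    have hmod : (n' + 1 - a) % (n' + 1) = n' + 1 - a := Nat.mod_eq_of_lt (by omega)
    rw [hmod]
    by_cases hj : (j : ℕ) < a
    · rw [if_pos hj]
      exact Nat.mod_eq_of_lt (by omega)
    · rw [if_neg hj]
      have hj' : (j : ℕ) + (n' + 1 - a) = (n' + 1) + ((j : ℕ) - a) := by omega
      rw [hj', Nat.add_mod_left]
      exact Nat.mod_eq_of_lt (by omega)
  set M : Matrix (Fin (n' + 1)) (Fin (n' + 1)) (KK (n' + 1)) :=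
    Matrix.of fun i (j : Fin (n' + 1)) => vv (n' + 1) i ^ (n' - (j : ℕ)) with hM
  have key : (Matrix.of fun i j => (vv (n' + 1) i ^ a) * ((Matrix.of fun i j =>
        vv (n' + 1) i ^ EE (n' + 1) a (-((n' + 1 : ℕ) : ℤ)) j) i j)) = M.submatrix id π := by
    ext i j
    simp only [Matrix.of_apply, Matrix.submatrix_apply, id_eq, hM]
    rw [← zpow_natCast (vv (n' + 1) i) a, ← zpow_add₀ (vv_ne_zero (n' + 1) i),
      ← zpow_natCast (vv (n' + 1) i) (n' - ((π j : ℕ)))]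
    congr 1
    simp only [EE]
    rw [hπval j]
    have hj := j.isLt
    split <;> (push_cast; omega)
  have step1 : (∏ i, vv (n' + 1) i) ^ a * ahat (n' + 1) a (-((n' + 1 : ℕ) : ℤ))
      = Matrix.det (M.submatrix id π) := by
    rw [← key, ← Finset.prod_pow]
    exact (Matrix.det_mul_column (fun i => vv (n' + 1) i ^ a) _).symm
  have hsign : Equiv.Perm.sign π = ((-1 : ℤˣ) ^ n') ^ (n' + 1 - a) := by
    rw [hπdef, map_pow, sign_finRotate, Nat.add_sub_cancel]
  have step2 : Matrix.det (M.submatrix id π)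
      = ((-1 : KK (n' + 1)) ^ (n' * (n' + 1 - a))) * Matrix.det M := by
    rw [Matrix.det_permute' π M, hsign]
    congr 1
    rw [← pow_mul]
    simp [Units.val_pow_eq_pow_val]
  have step3 : Matrix.det M
      = ff (n' + 1) (alternant (n' + 1) (fun j => n' + 1 - 1 - (j : ℕ))) := by
    rw [alternant, RingHom.map_det]
    congr 1
    ext i j
    simp only [RingHom.mapMatrix_apply, Matrix.map_apply, Matrix.of_apply, map_pow, hM, vv]
    norm_num
  rw [step1, step2, step3]
  norm_num

lemma count_subsets (n a : ℕ) (ha : 1 ≤ a) (i : Fin n) :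
    (((Finset.univ : Finset (Fin n)).powersetCard a).filter (fun I => i ∈ I)).card
      = (n - 1).choose (a - 1) := by
  have hb : (((Finset.univ : Finset (Fin n)).powersetCard a).filter (fun I => i ∈ I)).card
      = ((Finset.univ.erase i).powersetCard (a - 1)).card := by
    refine Finset.card_bij' (fun I _ => I.erase i) (fun J _ => insert i J) ?_ ?_ ?_ ?_
    · intro I hI
      simp only [Finset.mem_filter, Finset.mem_powersetCard] at hI ⊢
      exact ⟨Finset.erase_subset_erase i hI.1.1,
        by rw [Finset.card_erase_of_mem hI.2, hI.1.2]⟩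
    · intro J hJ
      simp only [Finset.mem_powersetCard] at hJ
      have hiJ : i ∉ J := fun h => (Finset.mem_erase.1 (hJ.1 h)).1 rfl
      simp only [Finset.mem_filter, Finset.mem_powersetCard]
      refine ⟨⟨Finset.subset_univ _, ?_⟩, Finset.mem_insert_self i J⟩
      rw [Finset.card_insert_of_notMem hiJ, hJ.2]
      omega
    · intro I hI
      simp only [Finset.mem_filter] at hI
      exact Finset.insert_erase hI.2
    · intro J hJ
      simp only [Finset.mem_powersetCard] at hJ
      exact Finset.erase_insert (fun h => (Finset.mem_erase.1 (hJ.1 h)).1 rfl)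
  rw [hb, Finset.card_powersetCard, Finset.card_erase_of_mem (Finset.mem_univ i)]
  simp

lemma prod_rr (n a : ℕ) (ha : 1 ≤ a) :
    ∏ I ∈ (Finset.univ : Finset (Fin n)).powersetCard a, rr n I
      = (∏ i, vv n i) ^ ((n - 1).choose (a - 1)) := by
  have h1 : ∀ I ∈ (Finset.univ : Finset (Fin n)).powersetCard a,
      rr n I = ∏ i ∈ Finset.univ, if i ∈ I then vv n i else 1 := by
    intro I _
    rw [rr, ← Finset.prod_filter, Finset.filter_mem_eq_inter, Finset.univ_inter]
  rw [Finset.prod_congr rfl h1, Finset.prod_comm, ← Finset.prod_pow]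
  refine Finset.prod_congr rfl fun i _ => ?_
  rw [← Finset.prod_filter, Finset.prod_const, count_subsets n a ha i]

lemma qP_coeff_top (n a : ℕ) (ha : 1 ≤ a) :
    (qP n a).coeff (n.choose a)
      = (-1) ^ (n.choose a) * (∏ i, vv n i) ^ ((n - 1).choose (a - 1)) := by
  have hfact : ∀ I : Finset (Fin n), (1 - Polynomial.C (rr n I) * Polynomial.X)
      = Polynomial.C (-(rr n I)) * Polynomial.X + Polynomial.C 1 := by
    intro I; rw [Polynomial.C_neg, Polynomial.C_1]; ring
  have hld : ∀ I : Finset (Fin n),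
      (1 - Polynomial.C (rr n I) * Polynomial.X).leadingCoeff = -(rr n I) := by
    intro I
    rw [hfact I]
    exact Polynomial.leadingCoeff_linear (neg_ne_zero.2 (rr_ne_zero n I))
  have hdeg1 : ∀ I : Finset (Fin n),
      (1 - Polynomial.C (rr n I) * Polynomial.X).natDegree = 1 := by
    intro I
    rw [hfact I]
    exact Polynomial.natDegree_linear (neg_ne_zero.2 (rr_ne_zero n I))
  have hne : ∀ I ∈ (Finset.univ : Finset (Fin n)).powersetCard a,
      (1 - Polynomial.C (rr n I) * Polynomial.X) ≠ 0 := by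
    intro I _ h0
    have h := hld I
    rw [h0] at h
    simp only [Polynomial.leadingCoeff_zero] at h
    exact rr_ne_zero n I (neg_eq_zero.1 h.symm)
  have hdeg : (qP n a).natDegree = n.choose a := by
    rw [qP, Polynomial.natDegree_prod _ _ hne]
    rw [Finset.sum_congr rfl (fun I _ => hdeg1 I)]
    simp [Finset.card_powersetCard]
  have hcoeff : (qP n a).coeff (n.choose a) = (qP n a).leadingCoeff := by
    rw [Polynomial.leadingCoeff, hdeg]
  rw [hcoeff, qP, Polynomial.leadingCoeff_prod,
    Finset.prod_congr rfl
      (fun I (_ : I ∈ (Finset.univ : Finset (Fin n)).powersetCard a) => hld I)]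
  have h2 : ∀ I ∈ (Finset.univ : Finset (Fin n)).powersetCard a,
      -(rr n I) = (-1) * rr n I := fun I _ => by ring
  rw [Finset.prod_congr rfl h2, Finset.prod_mul_distrib, Finset.prod_const,
    Finset.card_powersetCard, prod_rr n a ha]
  simp

lemma alternant_delta_ne_zero (n : ℕ) :
    alternant n (fun j => n - 1 - (j : ℕ)) ≠ 0 := by
  have hperm : alternant n (fun j => n - 1 - (j : ℕ))
      = (Equiv.Perm.sign (Fin.revPerm : Equiv.Perm (Fin n)) : ℤ)
        * Matrix.det (Matrix.vandermonde
            fun i : Fin n => (MvPolynomial.X i : MvPolynomial (Fin n) ℚ)) := by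
    rw [← Matrix.det_permute' Fin.revPerm, alternant]
    congr 1
    refine Matrix.ext fun i j => ?_
    simp only [Matrix.submatrix_apply, id_eq, Matrix.vandermonde_apply, Matrix.of_apply,
      Fin.revPerm_apply]
    congr 1
    have := j.isLt
    simp only [Fin.val_rev]
    omega
  rw [hperm, Matrix.det_vandermonde]
  intro h0
  rcases mul_eq_zero.1 h0 with h | h
  · rcases Int.units_eq_one_or (Equiv.Perm.sign (Fin.revPerm : Equiv.Perm (Fin n))) with hs | hs <;>
      rw [hs] at h <;> norm_num at h
  · obtain ⟨i, -, hi⟩ := Finset.prod_eq_zero_iff.1 h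
    obtain ⟨j, hjmem, hj⟩ := Finset.prod_eq_zero_iff.1 hi
    have hXji : (MvPolynomial.X j : MvPolynomial (Fin n) ℚ) = MvPolynomial.X i :=
      sub_eq_zero.1 hj
    have hji := MvPolynomial.X_injective hXji
    subst hji
    simp at hjmem

lemma le_choose (n a : ℕ) (ha : 1 ≤ a) (hlt : a < n) : n ≤ n.choose a := by
  induction n with
  | zero => omega
  | succ m ih =>
    rcases Nat.lt_or_ge a m with h | h
    · have h1 : m ≤ m.choose a := ih h
      have h2 : 1 ≤ m.choose (a - 1) := Nat.choose_pos (by omega)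
      have h3 : (m + 1).choose a = m.choose (a - 1) + m.choose a := by
        obtain ⟨b, rfl⟩ : ∃ b, a = b + 1 := ⟨a - 1, by omega⟩
        rw [Nat.choose_succ_succ]
        simp
      omega
    · have haa : a = m := by omega
      subst haa
      rw [Nat.choose_succ_self_right]

lemma a_le_choose (n a : ℕ) (ha : 1 ≤ a) (hlt : a < n) : a ≤ (n - 1).choose (a - 1) := by
  obtain ⟨b, rfl⟩ : ∃ b, a = b + 1 := ⟨a - 1, by omega⟩
  calc b + 1 = (b + 1).choose b := (Nat.choose_succ_self_right b).symm
    _ ≤ (n - 1).choose b := Nat.choose_le_choose b (by omega)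

lemma parity_aux (n a : ℕ) (ha : 1 ≤ a) (hlt : a < n) :
    ((n - 1) * (n - a)) % 2 = (a * (n - a)) % 2 := by
  rcases Nat.even_or_odd (n - a) with h | h
  · rw [Nat.even_iff] at h
    rw [Nat.mul_mod, Nat.mul_mod a, h]
    simp
  · rw [Nat.odd_iff] at h
    have hpar : (n - 1) % 2 = a % 2 := by omega
    rw [Nat.mul_mod, Nat.mul_mod a, hpar]

end RectAux


set_option maxHeartbeats 2000000 in
/-- With `s k` the Schur polynomial of the `a × k` rectangle in `n` variables
(bialternant formula) and `P(z) = Q(z) ∑_k s_{k^a} z^k` where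
`Q(z) = ∏_{|I|=a}(1 - z u_I)`, the leading coefficient of `P`, i.e. the coefficient
of `z^{(n choose a) - n}`, is `(-1)^{(n choose a)+a(n-a)-1} (u₁⋯u_n)^{(n-1 choose a-1)-a}`. -/
theorem rect_schur_gf_leading (n a : ℕ) (ha : 1 ≤ a) (han : a ≤ n)
    (s : ℕ → MvPolynomial (Fin n) ℚ)
    (hs : ∀ k : ℕ, s k * alternant n (fun j => n - 1 - (j : ℕ)) =
      alternant n (fun j => (if (j : ℕ) < a then k else 0) + (n - 1 - (j : ℕ)))) :
    PowerSeries.coeff (R := MvPolynomial (Fin n) ℚ) (n.choose a - n)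
        ((∏ I ∈ (Finset.univ : Finset (Fin n)).powersetCard a,
          (1 - PowerSeries.C (R := MvPolynomial (Fin n) ℚ) (∏ i ∈ I, MvPolynomial.X i) *
            PowerSeries.X)) * PowerSeries.mk s) =
      (-1) ^ (n.choose a + a * (n - a) - 1) *
        (∏ i, MvPolynomial.X i) ^ ((n - 1).choose (a - 1) - a) := by
  have hΔ0 : alternant n (fun j => n - 1 - (j : ℕ)) ≠ 0 := alternant_delta_ne_zero n
  have hs0 : s 0 = 1 := by
    have h := hs 0
    have heq : alternant n (fun j => (if (j : ℕ) < a then 0 else 0) + (n - 1 - (j : ℕ)))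
        = alternant n (fun j => n - 1 - (j : ℕ)) := by
      congr 1; funext j; simp
    rw [heq] at h
    exact mul_right_cancel₀ hΔ0 (h.trans (one_mul _).symm)
  rcases eq_or_lt_of_le han with rfl | hlt
  · -- a = n case
    have hN : a.choose a - a = 0 := by rw [Nat.choose_self]; omega
    rw [hN]
    have hsign : a.choose a + a * (a - a) - 1 = 0 := by
      rw [Nat.choose_self, Nat.sub_self, Nat.mul_zero]
    have hexp : (a - 1).choose (a - 1) - a = 0 := by
      rw [Nat.choose_self]; omega
    rw [hsign, hexp, pow_zero, pow_zero, mul_one]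
    rw [PowerSeries.coeff_zero_eq_constantCoeff, map_mul, map_prod]
    have hc : ∀ I ∈ (Finset.univ : Finset (Fin a)).powersetCard a,
        PowerSeries.constantCoeff (R := MvPolynomial (Fin a) ℚ)
          (1 - PowerSeries.C (R := MvPolynomial (Fin a) ℚ) (∏ i ∈ I, MvPolynomial.X i) *
            PowerSeries.X) = 1 := by
      intro I _
      simp
    rw [Finset.prod_congr rfl hc, Finset.prod_const_one, one_mul]
    simpa using hs0
  · -- main case a < n
    set C := n.choose a with hC
    set N := n.choose a - n with hNdef
    set D := (n - 1).choose (a - 1) with hD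
    have hCn : n ≤ C := le_choose n a ha hlt
    have haD : a ≤ D := a_le_choose n a ha hlt
    set Δ : KK n := ff n (alternant n (fun j => n - 1 - (j : ℕ))) with hΔdef
    have hΔ : Δ ≠ 0 := fun h => hΔ0 (ff_inj n (h.trans (map_zero _).symm))
    set ω : KK n := ∏ i, vv n i with hω
    have hω0 : ω ≠ 0 := Finset.prod_ne_zero_iff.2 fun i _ => vv_ne_zero n i
    -- the power series over R
    set Qps : PowerSeries (MvPolynomial (Fin n) ℚ) :=
      ∏ I ∈ (Finset.univ : Finset (Fin n)).powersetCard a,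
        (1 - PowerSeries.C (R := MvPolynomial (Fin n) ℚ) (∏ i ∈ I, MvPolynomial.X i) *
          PowerSeries.X) with hQps
    have hmapQ : PowerSeries.map (ff n) Qps
        = ((qP n a : Polynomial (KK n)) : PowerSeries (KK n)) := by
      rw [hQps, qP, ← Polynomial.coeToPowerSeries.ringHom_apply, map_prod, map_prod]
      refine Finset.prod_congr rfl fun I _ => ?_
      simp only [map_sub, map_one, map_mul, Polynomial.coeToPowerSeries.ringHom_apply,
        Polynomial.coe_sub, Polynomial.coe_one, Polynomial.coe_mul, Polynomial.coe_C,
        Polynomial.coe_X, PowerSeries.map_C, PowerSeries.map_X]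
      rw [rr_eq]
    have hGmk : PowerSeries.C (R := KK n) Δ * PowerSeries.map (ff n) (PowerSeries.mk s)
        = PowerSeries.mk (fun k => ahat n a (k : ℤ)) := by
      ext k
      rw [PowerSeries.coeff_C_mul, PowerSeries.coeff_map, PowerSeries.coeff_mk,
        PowerSeries.coeff_mk, ahat_ofNat n a k, hΔdef, ← map_mul]
      congr 1
      rw [mul_comm]
      exact hs k
    have hchain : Δ * ff n (PowerSeries.coeff (R := MvPolynomial (Fin n) ℚ) N
          (Qps * PowerSeries.mk s))
        = ∑ m ∈ Finset.range (N + 1), (qP n a).coeff m * ahat n a ((N : ℤ) - m) := by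
      rw [← PowerSeries.coeff_map, map_mul, hmapQ, ← PowerSeries.coeff_C_mul]
      rw [show PowerSeries.C (R := KK n) Δ * (((qP n a : Polynomial (KK n)) : PowerSeries (KK n))
            * PowerSeries.map (ff n) (PowerSeries.mk s))
          = ((qP n a : Polynomial (KK n)) : PowerSeries (KK n))
            * (PowerSeries.C (R := KK n) Δ * PowerSeries.map (ff n) (PowerSeries.mk s)) by ring]
      rw [hGmk, PowerSeries.coeff_mul, Finset.Nat.sum_antidiagonal_eq_sum_range_succ_mk]
      refine Finset.sum_congr rfl fun m hm => ?_
      rw [Polynomial.coeff_coe, PowerSeries.coeff_mk]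
      have hmN : m ≤ N := Nat.lt_succ_iff.1 (Finset.mem_range.1 hm)
      have hcast : ((N - m : ℕ) : ℤ) = (N : ℤ) - m := by omega
      rw [hcast]
    have hM := rect_master n a (le_of_lt hlt) (N : ℤ)
    have hsplit : ∑ m ∈ Finset.range (C + 1), (qP n a).coeff m * ahat n a ((N : ℤ) - m)
        = (∑ m ∈ Finset.range (N + 1), (qP n a).coeff m * ahat n a ((N : ℤ) - m))
          + ∑ m ∈ Finset.Ico (N + 1) (C + 1), (qP n a).coeff m * ahat n a ((N : ℤ) - m) := by
      rw [Finset.range_eq_Ico, Finset.range_eq_Ico]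
      exact (Finset.sum_Ico_consecutive (fun m => (qP n a).coeff m * ahat n a ((N : ℤ) - m)) (m := 0) (n := N + 1) (k := C + 1) (by omega) (by omega)).symm
    have hmid : ∑ m ∈ Finset.Ico (N + 1) (C + 1), (qP n a).coeff m * ahat n a ((N : ℤ) - m)
        = (qP n a).coeff C * ahat n a (-(n : ℤ)) := by
      rw [Finset.sum_Ico_succ_top (by omega)]
      have hz : ∑ m ∈ Finset.Ico (N + 1) C, (qP n a).coeff m * ahat n a ((N : ℤ) - m) = 0 := by
        refine Finset.sum_eq_zero fun m hm => ?_
        rw [Finset.mem_Ico] at hm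
        rw [ahat_vanish n a ha hlt _ (by omega) (by omega), mul_zero]
      rw [hz, zero_add]
      congr 2
      omega
    have hL : Δ * ff n (PowerSeries.coeff (R := MvPolynomial (Fin n) ℚ) N
          (Qps * PowerSeries.mk s))
        = -((qP n a).coeff C * ahat n a (-(n : ℤ))) := by
      rw [hchain]
      have h0 := hsplit.symm.trans hM
      rw [hmid] at h0
      exact eq_neg_of_add_eq_zero_left h0
    -- compute the right-hand side
    have hnegn : ahat n a (-(n : ℤ)) = (-1) ^ ((n - 1) * (n - a)) * Δ * (ω ^ a)⁻¹ := by
      have h := ahat_neg_n n a ha hlt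
      rw [← hω, ← hΔdef] at h
      field_simp at h ⊢
      linear_combination h
    have hcoefftop : (qP n a).coeff C = (-1) ^ C * ω ^ D := by
      rw [hC, qP_coeff_top n a ha, ← hω, ← hD]
    have hRHS : Δ * ff n ((-1) ^ (C + a * (n - a) - 1)
          * (∏ i, MvPolynomial.X i) ^ (D - a))
        = -((qP n a).coeff C * ahat n a (-(n : ℤ))) := by
      rw [hnegn, hcoefftop]
      have hffm : ff n ((-1) ^ (C + a * (n - a) - 1)
            * (∏ i, MvPolynomial.X i) ^ (D - a))
          = (-1) ^ (C + a * (n - a) - 1) * ω ^ (D - a) := by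
        rw [map_mul, map_pow, map_pow, map_neg, map_one, map_prod, hω]
        rfl
      rw [hffm]
      have hωDa : ω ^ (D - a) = ω ^ D * (ω ^ a)⁻¹ := pow_sub₀ ω hω0 haD
      rw [hωDa]
      have hsigns : ((-1 : KK n) ^ (C + a * (n - a) - 1))
          = -((-1) ^ C * (-1) ^ ((n - 1) * (n - a))) := by
        rw [← pow_add]
        have hstep : (-1 : KK n) ^ (C + (n - 1) * (n - a) + 1)
            = -(-1 : KK n) ^ (C + (n - 1) * (n - a)) := by
          rw [pow_succ]; ring
        rw [← hstep]
        rw [neg_one_pow_eq_pow_mod_two,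
          neg_one_pow_eq_pow_mod_two (n := C + (n - 1) * (n - a) + 1)]
        congr 1
        have hp := parity_aux n a ha hlt
        have hC1 : 1 ≤ C := Nat.choose_pos (le_of_lt hlt)
        generalize hgen1 : (n - 1) * (n - a) = p at hp ⊢
        generalize hgen2 : a * (n - a) = q at hp ⊢
        omega
      rw [hsigns]
      ring
    have : Δ * ff n (PowerSeries.coeff (R := MvPolynomial (Fin n) ℚ) N (Qps * PowerSeries.mk s))
        = Δ * ff n ((-1) ^ (C + a * (n - a) - 1) * (∏ i, MvPolynomial.X i) ^ (D - a)) := by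
      rw [hL, hRHS]
    have h2 := mul_left_cancel₀ hΔ this
    exact ff_inj n h2
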